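/- Let γ be a 2n×2n real symmetric matrix with γ ≥ iσ_{2n} (σ_{2n} = [[0,I_n],[-I_n,0]]). Then all symplectic eigenvalues of γ, i.e., the positive square roots of the eigenvalues of -σ_{2n} γ σ_{2n} γ, are greater than or equal to 1. -/

import Mathlib

open Matrix Complex ComplexOrder

/-- The standard symplectic form `[[0, I_n], [-I_n, 0]]` on `n` modes. -/
def sympForm (n : ℕ) : Matrix (Fin n ⊕ Fin n) (Fin n ⊕ Fin n) ℝ :=
  Matrix.fromBlocks 0 1 (-1) 0

lemma map_mul_ofReal {m : Type*} [Fintype m] (A B : Matrix m m ℝ) :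
    (A * B).map Complex.ofReal = A.map Complex.ofReal * B.map Complex.ofReal := by
  ext i j
  simp [Matrix.mul_apply]

/-- If `γ` is real symmetric with `γ ≥ iσ_{2n}`, then every eigenvalue of
`-σ_{2n} γ σ_{2n} γ` is real and `≥ 1`; i.e. all symplectic eigenvalues of `γ` (the
positive square roots of those eigenvalues) are `≥ 1`. -/
theorem symplectic_eigenvalues_ge_one (n : ℕ)
    (γ : Matrix (Fin n ⊕ Fin n) (Fin n ⊕ Fin n) ℝ) (hγ : γ.IsSymm)
    (h : ((γ.map Complex.ofReal) - Complex.I • ((sympForm n).map Complex.ofReal)).PosSemidef) :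
    ∀ μ ∈ spectrum ℂ ((-(sympForm n * γ * sympForm n * γ)).map Complex.ofReal),
      μ.im = 0 ∧ 1 ≤ μ.re := by
  intro μ hμ
  set σ' : Matrix (Fin n ⊕ Fin n) (Fin n ⊕ Fin n) ℂ := (sympForm n).map Complex.ofReal with hσ'
  set γ' : Matrix (Fin n ⊕ Fin n) (Fin n ⊕ Fin n) ℂ := γ.map Complex.ofReal with hγ'def
  have hσσ : σ' * σ' = -1 := by
    have h1 : sympForm n * sympForm n = -1 := by
      simp [sympForm, Matrix.fromBlocks_multiply, ← Matrix.fromBlocks_one,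
        Matrix.fromBlocks_neg]
    rw [hσ', ← map_mul_ofReal, h1]
    ext i j
    simp only [Matrix.map_apply, Matrix.one_apply, Matrix.neg_apply]
    split_ifs <;> simp
  have hσT : σ'ᵀ = -σ' := by
    have h1 : (sympForm n)ᵀ = -(sympForm n) := by
      simp [sympForm, Matrix.fromBlocks_transpose, Matrix.fromBlocks_neg]
    rw [hσ', ← Matrix.transpose_map, h1]
    ext i j; simp
  have hγT : γ'ᵀ = γ' := by
    rw [hγ'def, ← Matrix.transpose_map, hγ.eq]
  -- B = i σ' γ'
  set B : Matrix (Fin n ⊕ Fin n) (Fin n ⊕ Fin n) ℂ := Complex.I • (σ' * γ') with hB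
  have hBB : B * B = (-(sympForm n * γ * sympForm n * γ)).map Complex.ofReal := by
    have hmap : (sympForm n * γ * sympForm n * γ).map Complex.ofReal
        = σ' * γ' * σ' * γ' := by
      rw [map_mul_ofReal, map_mul_ofReal, map_mul_ofReal]
    have hneg : (-(sympForm n * γ * sympForm n * γ)).map Complex.ofReal
        = -((sympForm n * γ * sympForm n * γ).map Complex.ofReal) := by
      ext i j; simp
    rw [hneg, hmap, hB, smul_mul_smul_comm, Complex.I_mul_I, neg_smul, one_smul]
    simp [Matrix.mul_assoc]
  -- the transposed PSD hypothesis
  have hT : (γ' + Complex.I • σ').PosSemidef := by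
    have := h.transpose
    have heq : (γ' - Complex.I • σ')ᵀ = γ' + Complex.I • σ' := by
      rw [Matrix.transpose_sub, Matrix.transpose_smul, hσT, hγT, smul_neg, sub_neg_eq_add]
    rwa [heq] at this
  -- σ' is injective on vectors
  have hσinj : ∀ v : (Fin n ⊕ Fin n) → ℂ, σ' *ᵥ v = 0 → v = 0 := by
    intro v hv
    have h2 : σ' *ᵥ (σ' *ᵥ v) = -v := by
      rw [Matrix.mulVec_mulVec, hσσ, Matrix.neg_mulVec, Matrix.one_mulVec]
    rw [hv, Matrix.mulVec_zero] at h2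
    simpa using h2.symm
  -- key claim about eigenvectors of B
  have key : ∀ c : ℂ, ∀ v : (Fin n ⊕ Fin n) → ℂ, v ≠ 0 → B *ᵥ v = c • v →
      (c ^ 2).im = 0 ∧ 1 ≤ (c ^ 2).re := by
    intro c v hv0 hv
    have h1 : (σ' * B) *ᵥ v = c • (σ' *ᵥ v) := by
      rw [← Matrix.mulVec_mulVec, hv, Matrix.mulVec_smul]
    have h2 : σ' * B = (-Complex.I) • γ' := by
      rw [hB, mul_smul_comm, ← Matrix.mul_assoc, hσσ, neg_smul]
      simp
    rw [h2, Matrix.smul_mulVec] at h1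
    have hγv : γ' *ᵥ v = (Complex.I * c) • (σ' *ᵥ v) := by
      have h3 := congrArg (fun w => (Complex.I : ℂ) • w) h1
      simp only [smul_smul] at h3
      rw [show Complex.I * -Complex.I = 1 by
        rw [mul_neg, Complex.I_mul_I, neg_neg], one_smul] at h3
      exact h3
    set g : ℂ := star v ⬝ᵥ (γ' *ᵥ v) with hg
    set s : ℂ := star v ⬝ᵥ ((Complex.I • σ') *ᵥ v) with hs
    have hgs : g = c * s := by
      rw [hg, hs, hγv, Matrix.smul_mulVec, dotProduct_smul,
        dotProduct_smul, smul_eq_mul, smul_eq_mul]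
      ring
    have h1' : 0 ≤ g - s := by
      have := h.dotProduct_mulVec_nonneg v
      rwa [Matrix.sub_mulVec, dotProduct_sub] at this
    have h2' : 0 ≤ g + s := by
      have := hT.dotProduct_mulVec_nonneg v
      rwa [Matrix.add_mulVec, dotProduct_add] at this
    rw [Complex.nonneg_iff] at h1' h2'
    have e1 := h1'.2
    have e2 := h2'.2
    have e3 := h1'.1
    have e4 := h2'.1
    simp only [Complex.sub_im, Complex.add_im, Complex.sub_re, Complex.add_re] at e1 e2 e3 e4
    have him_g : g.im = 0 := by linarith
    have him_s : s.im = 0 := by linarith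
    have hre1 : s.re ≤ g.re := by linarith
    have hre2 : -g.re ≤ s.re := by linarith
    by_cases hs0 : s = 0
    · -- degenerate case: c = 1
      have hg0 : g = 0 := by rw [hgs, hs0, mul_zero]
      have hdot : star v ⬝ᵥ ((γ' - Complex.I • σ') *ᵥ v) = 0 := by
        rw [Matrix.sub_mulVec, dotProduct_sub, ← hg, ← hs, hg0, hs0, sub_zero]
      have hker : (γ' - Complex.I • σ') *ᵥ v = 0 :=
        (h.dotProduct_mulVec_zero_iff v).mp hdot
      rw [Matrix.sub_mulVec, sub_eq_zero, hγv, Matrix.smul_mulVec] at hker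
      have hc1 : c = 1 := by
        by_contra hc
        apply hv0
        apply hσinj
        have hz : (Complex.I * c - Complex.I) • (σ' *ᵥ v) = 0 := by
          rw [sub_smul, hker, sub_self]
        have hne : Complex.I * c - Complex.I ≠ 0 := by
          have := mul_ne_zero Complex.I_ne_zero (sub_ne_zero.mpr hc)
          simpa [mul_sub] using this
        exact (smul_eq_zero.mp hz).resolve_left hne
      rw [hc1]
      norm_num
    · -- main case: c is real with |c| ≥ 1
      have hsre : s.re ≠ 0 := fun hx => hs0 (Complex.ext hx him_s)
      have hseq : s = (s.re : ℂ) := Complex.ext rfl (by simp [him_s])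
      have hgeq : g = (g.re : ℂ) := Complex.ext rfl (by simp [him_g])
      have hs0' : (s.re : ℂ) ≠ 0 := by exact_mod_cast hsre
      have hc : c = ((g.re / s.re : ℝ) : ℂ) := by
        rw [Complex.ofReal_div, eq_div_iff hs0', ← hseq, ← hgeq, ← hgs]
      have hc2 : c ^ 2 = (((g.re / s.re) ^ 2 : ℝ) : ℂ) := by
        rw [hc]; push_cast; ring
      have hsq : s.re ^ 2 ≤ g.re ^ 2 := sq_le_sq' hre2 hre1
      have hspos : 0 < s.re ^ 2 := by positivity
      constructor
      · rw [hc2, Complex.ofReal_im]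
      · rw [hc2, Complex.ofReal_re, div_pow, one_le_div hspos]
        exact hsq
  -- extract eigenvectors from non-units
  have getv : ∀ c : ℂ, ¬IsUnit (B - c • (1 : Matrix (Fin n ⊕ Fin n) (Fin n ⊕ Fin n) ℂ)) →
      ∃ v, v ≠ 0 ∧ B *ᵥ v = c • v := by
    intro c hcu
    have hdet : (B - c • 1).det = 0 := by
      by_contra hd
      exact hcu ((Matrix.isUnit_iff_isUnit_det _).mpr (isUnit_iff_ne_zero.mpr hd))
    obtain ⟨v, hv0, hv⟩ := Matrix.exists_mulVec_eq_zero_iff.mpr hdet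
    refine ⟨v, hv0, ?_⟩
    rwa [Matrix.sub_mulVec, Matrix.smul_mulVec c (1 : Matrix (Fin n ⊕ Fin n) (Fin n ⊕ Fin n) ℂ) v, Matrix.one_mulVec, sub_eq_zero] at hv
  -- spectral mapping
  obtain ⟨lam, hlam⟩ := IsAlgClosed.exists_pow_nat_eq μ (n := 2) (by norm_num)
  rw [spectrum.mem_iff] at hμ
  have hμ' : ¬IsUnit ((algebraMap ℂ (Matrix (Fin n ⊕ Fin n) (Fin n ⊕ Fin n) ℂ)) μ - B * B) := by
    rwa [hBB]
  have hexpand : (B - lam • 1) * (B + lam • 1)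
      = B * B - (lam ^ 2) • (1 : Matrix (Fin n ⊕ Fin n) (Fin n ⊕ Fin n) ℂ) := by
    have e1 : B * (lam • (1 : Matrix (Fin n ⊕ Fin n) (Fin n ⊕ Fin n) ℂ)) = lam • B := by
      rw [mul_smul_comm, mul_one]
    have e2 : (lam • (1 : Matrix (Fin n ⊕ Fin n) (Fin n ⊕ Fin n) ℂ)) * B = lam • B := by
      rw [smul_mul_assoc, one_mul]
    have e3 : (lam • (1 : Matrix (Fin n ⊕ Fin n) (Fin n ⊕ Fin n) ℂ)) * (lam • 1)
        = (lam ^ 2) • (1 : Matrix (Fin n ⊕ Fin n) (Fin n ⊕ Fin n) ℂ) := by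
      rw [smul_mul_smul_comm, mul_one, sq]
    rw [sub_mul, mul_add, mul_add, e1, e2, e3]
    abel
  have hfact : (algebraMap ℂ (Matrix (Fin n ⊕ Fin n) (Fin n ⊕ Fin n) ℂ)) μ - B * B
      = -((B - lam • 1) * (B + lam • 1)) := by
    rw [hexpand, neg_sub, Algebra.algebraMap_eq_smul_one, hlam]
  have hcases : ¬IsUnit (B - lam • (1 : Matrix (Fin n ⊕ Fin n) (Fin n ⊕ Fin n) ℂ)) ∨
      ¬IsUnit (B - (-lam) • (1 : Matrix (Fin n ⊕ Fin n) (Fin n ⊕ Fin n) ℂ)) := by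
    by_contra hcon
    push_neg at hcon
    apply hμ'
    rw [hfact]
    have h2 : B + lam • 1 = B - (-lam) • (1 : Matrix (Fin n ⊕ Fin n) (Fin n ⊕ Fin n) ℂ) := by
      rw [neg_smul, sub_neg_eq_add]
    rw [h2]
    exact (hcon.1.mul hcon.2).neg
  rcases hcases with hcu | hcu
  · obtain ⟨v, hv0, hv⟩ := getv lam hcu
    have := key lam v hv0 hv
    rwa [hlam] at this
  · obtain ⟨v, hv0, hv⟩ := getv (-lam) hcu
    have := key (-lam) v hv0 hv
    rwa [neg_pow, show ((-1 : ℂ)) ^ 2 = 1 by norm_num, one_mul, hlam] at this
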